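/- Suppose (ξ_i, 1 ≤ i ≤ N) are nonnegative random variables with random N < ∞, and let (X, Y) be a pair of integrable nonnegative random variables with equal means, such that (X, Y) =_d (Σ_i ξ_i X_i, Σ_i ξ_i Y_i) where ((X_i, Y_i)) are i.i.d. copies of (X, Y) independent of (ξ, N). Then |Σ_i ξ_i (X_i − Y_i)| = Σ_i ξ_i |X_i − Y_i| almost surely. -/

import Mathlib

open MeasureTheory ProbabilityTheory
open scoped ENNReal

lemma measurable_sInf_nat {α : Type*} [MeasurableSpace α] {p : ℕ → α → Prop}
    (hp : ∀ n, MeasurableSet {x | p n x}) :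
    Measurable fun x => sInf {n | p n x} := by
  classical
  have h : ∀ x, ∃ n, p n x ∨ ∀ m, ¬ p m x := by
    intro x
    by_cases hx : ∃ n, p n x
    · obtain ⟨n, hn⟩ := hx; exact ⟨n, Or.inl hn⟩
    · push_neg at hx; exact ⟨0, Or.inr hx⟩
  have hm : Measurable fun x => Nat.find (h x) := by
    refine measurable_find h fun k => ?_
    have he : {x | p k x ∨ ∀ m, ¬ p m x} =
        {x | p k x} ∪ ⋂ m, {x | p m x}ᶜ := by
      ext x; simp [Set.mem_iInter]
    exact he ▸ (hp k).union (MeasurableSet.iInter fun m => (hp m).compl)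
  convert hm using 2 with x
  by_cases hx : ∃ n, p n x
  · have h1 : p (Nat.find (h x)) x := by
      rcases Nat.find_spec (h x) with h' | h'
      · exact h'
      · exact absurd hx (by push_neg; exact h')
    refine le_antisymm (Nat.sInf_le h1) (Nat.find_le (Or.inl (Nat.sInf_mem hx)))
  · have hS : {n | p n x} = ∅ := by
      push_neg at hx; ext n; simp [hx n]
    rw [hS, Nat.sInf_empty]
    refine (Nat.le_zero.mp (Nat.find_le (Or.inr ?_))).symm
    push_neg at hx; exact hx

lemma measurable_sum_range {Ω : Type*} [MeasurableSpace Ω] {M : Ω → ℕ}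
    (hM : Measurable M) {F : ℕ → Ω → ℝ} (hF : ∀ i, Measurable (F i)) :
    Measurable fun ω => ∑ i ∈ Finset.range (M ω), F i ω := by
  have h : Measurable fun q : Ω × ℕ => ∑ i ∈ Finset.range q.2, F i q.1 :=
    measurable_from_prod_countable_left fun n => by
      simpa using Finset.measurable_sum (Finset.range n) (fun i _ => hF i)
  exact h.comp (measurable_id.prodMk hM)

theorem linear_rde_bivariate_equality
    {Ω : Type*} [MeasurableSpace Ω] (P : Measure Ω) [IsProbabilityMeasure P]
    (N : Ω → ℕ) (ξ : ℕ → Ω → ℝ) (XY : ℕ → Ω → ℝ × ℝ)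
    (hξ0 : ∀ i ω, 0 ≤ ξ i ω)
    (hXY0 : ∀ i ω, 0 ≤ (XY i ω).1 ∧ 0 ≤ (XY i ω).2)
    (hiid : iIndepFun XY P)
    (hident : ∀ i, IdentDistrib (XY i) (XY 0) P P)
    (hblock : IndepFun (fun ω => (N ω, fun i => ξ i ω)) (fun ω i => XY i ω) P)
    (hXint : Integrable (fun ω => (XY 0 ω).1) P)
    (hYint : Integrable (fun ω => (XY 0 ω).2) P)
    (hmeans : ∫ ω, (XY 0 ω).1 ∂P = ∫ ω, (XY 0 ω).2 ∂P)
    (hnorm : ∫ ω, ∑ i ∈ Finset.range (N ω), ξ i ω ∂P = 1)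
    (hξint : ∀ i, Integrable (ξ i) P)
    (hfix : IdentDistrib
      (fun ω => (∑ i ∈ Finset.range (N ω), ξ i ω * (XY i ω).1,
                 ∑ i ∈ Finset.range (N ω), ξ i ω * (XY i ω).2))
      (XY 0) P P) :
    ∀ᵐ ω ∂P,
      |∑ i ∈ Finset.range (N ω), ξ i ω * ((XY i ω).1 - (XY i ω).2)| =
        ∑ i ∈ Finset.range (N ω), ξ i ω * |(XY i ω).1 - (XY i ω).2| := by
  classical
  -- the total weight W and its measurable version
  set W : Ω → ℝ := fun ω => ∑ i ∈ Finset.range (N ω), ξ i ω with hW_def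
  have hWint : Integrable W P := by
    by_contra h
    rw [integral_undef h] at hnorm
    exact one_ne_zero hnorm.symm
  set W₀ : Ω → ℝ := hWint.1.mk W with hW₀_def
  have hW₀meas : Measurable W₀ := hWint.1.stronglyMeasurable_mk.measurable
  have hW₀ae : W =ᵐ[P] W₀ := hWint.1.ae_eq_mk
  -- measurable nonnegative versions of ξ
  set ξ' : ℕ → Ω → ℝ := fun i ω => max ((hξint i).1.mk (ξ i) ω) 0 with hξ'_def
  have hξ'meas : ∀ i, Measurable (ξ' i) := fun i =>
    ((hξint i).1.stronglyMeasurable_mk.measurable).max measurable_const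
  have hξ'0 : ∀ i ω, 0 ≤ ξ' i ω := fun i ω => le_max_right _ _
  have hξ'ae : ∀ᵐ ω ∂P, ∀ i, ξ' i ω = ξ i ω := by
    rw [ae_all_iff]
    intro i
    filter_upwards [(hξint i).1.ae_eq_mk] with ω h
    show max _ 0 = ξ i ω
    rw [← h]
    exact max_eq_left (hξ0 i ω)
  -- measurable versions of XY
  have hXYm : ∀ i, AEMeasurable (XY i) P := fun i => (hident i).aemeasurable_fst
  set XY' : ℕ → Ω → ℝ × ℝ := fun i => (hXYm i).mk (XY i) with hXY'_def
  have hXY'meas : ∀ i, Measurable (XY' i) := fun i => (hXYm i).measurable_mk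
  have hXY'ae : ∀ᵐ ω ∂P, ∀ i, XY' i ω = XY i ω :=
    ae_all_iff.2 fun i => (hXYm i).ae_eq_mk.symm
  -- the measurable substitute for N
  set Nt : Ω → ℕ := fun ω => sInf {n | ∑ i ∈ Finset.range n, ξ' i ω = W₀ ω} with hNt_def
  have hNtmeas : Measurable Nt := by
    apply measurable_sInf_nat
    intro n
    exact measurableSet_eq_fun
      (Finset.measurable_sum (Finset.range n) fun i _ => hξ'meas i)
      hW₀meas
  -- the basic facts about Nt on a full measure set
  have hNfacts : ∀ᵐ ω ∂P, Nt ω ≤ N ω ∧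
      (∑ i ∈ Finset.range (Nt ω), ξ' i ω = W₀ ω) ∧
      ∀ i ∈ Finset.Ico (Nt ω) (N ω), ξ i ω = 0 := by
    filter_upwards [hξ'ae, hW₀ae] with ω h1 h2
    have hNmem : N ω ∈ {n | ∑ i ∈ Finset.range n, ξ' i ω = W₀ ω} := by
      show ∑ i ∈ Finset.range (N ω), ξ' i ω = W₀ ω
      rw [Finset.sum_congr rfl fun i _ => h1 i]
      exact h2
    have hle : Nt ω ≤ N ω := Nat.sInf_le hNmem
    have hmem : Nt ω ∈ {n | ∑ i ∈ Finset.range n, ξ' i ω = W₀ ω} :=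
      Nat.sInf_mem ⟨_, hNmem⟩
    refine ⟨hle, hmem, ?_⟩
    have hsum0 : ∑ i ∈ Finset.Ico (Nt ω) (N ω), ξ i ω = 0 := by
      have hsplit := Finset.sum_range_add_sum_Ico (fun i => ξ i ω) hle
      have e1 : ∑ i ∈ Finset.range (Nt ω), ξ i ω = W₀ ω := by
        rw [← Finset.sum_congr rfl fun i (_ : i ∈ Finset.range (Nt ω)) => h1 i]
        exact hmem
      have e2 : ∑ i ∈ Finset.range (N ω), ξ i ω = W₀ ω := h2
      rw [e1, e2] at hsplit
      linarith
    intro i hi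
    exact (Finset.sum_eq_zero_iff_of_nonneg fun j _ => hξ0 j ω).mp hsum0 i hi
  -- sums over range N can be replaced by sums over range Nt
  have htransfer : ∀ᵐ ω ∂P, ∀ c : ℕ → ℝ,
      ∑ i ∈ Finset.range (N ω), ξ i ω * c i = ∑ i ∈ Finset.range (Nt ω), ξ i ω * c i := by
    filter_upwards [hNfacts] with ω hω c
    obtain ⟨hle, -, hz⟩ := hω
    have hIco : ∑ i ∈ Finset.Ico (Nt ω) (N ω), ξ i ω * c i = 0 :=
      Finset.sum_eq_zero fun i hi => by rw [hz i hi, zero_mul]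
    rw [← Finset.sum_range_add_sum_Ico (fun i => ξ i ω * c i) hle, hIco, add_zero]
  -- the main real-valued quantities (fully measurable)
  set St : Ω → ℝ := fun ω => ∑ i ∈ Finset.range (Nt ω), ξ' i ω * ((XY' i ω).1 - (XY' i ω).2)
    with hSt_def
  set Tt : Ω → ℝ := fun ω => ∑ i ∈ Finset.range (Nt ω), ξ' i ω * |(XY' i ω).1 - (XY' i ω).2|
    with hTt_def
  have hStmeas : Measurable St :=
    measurable_sum_range hNtmeas fun i =>
      (hξ'meas i).mul ((measurable_fst.comp (hXY'meas i)).sub (measurable_snd.comp (hXY'meas i)))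
  have hTtmeas : Measurable Tt :=
    measurable_sum_range hNtmeas fun i =>
      (hξ'meas i).mul ((measurable_fst.comp (hXY'meas i)).sub (measurable_snd.comp (hXY'meas i))).abs
  -- identification with the original sums
  have hSt_ae : St =ᵐ[P]
      fun ω => ∑ i ∈ Finset.range (N ω), ξ i ω * ((XY i ω).1 - (XY i ω).2) := by
    filter_upwards [hξ'ae, hXY'ae, htransfer] with ω h1 h2 h3
    rw [h3 fun i => (XY i ω).1 - (XY i ω).2]
    exact Finset.sum_congr rfl fun i _ => by rw [h1 i, h2 i]
  have hTt_ae : Tt =ᵐ[P]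
      fun ω => ∑ i ∈ Finset.range (N ω), ξ i ω * |(XY i ω).1 - (XY i ω).2| := by
    filter_upwards [hξ'ae, hXY'ae, htransfer] with ω h1 h2 h3
    rw [h3 fun i => |(XY i ω).1 - (XY i ω).2|]
    exact Finset.sum_congr rfl fun i _ => by rw [h1 i, h2 i]
  -- the reference value ζbar = E|X - Y|
  set φ : ℝ × ℝ → ℝ≥0∞ := fun p => ENNReal.ofReal |p.1 - p.2| with hφ_def
  have hφmeas : Measurable φ := (measurable_fst.sub measurable_snd).abs.ennreal_ofReal
  set ζbar : ℝ≥0∞ := ∫⁻ ω, ENNReal.ofReal |(XY 0 ω).1 - (XY 0 ω).2| ∂P with hζbar_def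
  have hζbar_ne : ζbar ≠ ∞ := by
    have hZint : Integrable (fun ω => (XY 0 ω).1 - (XY 0 ω).2) P := hXint.sub hYint
    have := (hasFiniteIntegral_iff_norm _).mp hZint.2
    rw [hζbar_def]
    refine ne_of_lt (lt_of_le_of_lt (le_of_eq (lintegral_congr fun ω => ?_)) this)
    rw [Real.norm_eq_abs]
  -- E|S| = ζbar via the fixed point equation
  have hfE_lint : ∫⁻ ω, ENNReal.ofReal |St ω| ∂P = ζbar := by
    have hae : (fun ω => ENNReal.ofReal |St ω|) =ᵐ[P]
        fun ω => φ (∑ i ∈ Finset.range (N ω), ξ i ω * (XY i ω).1,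
                    ∑ i ∈ Finset.range (N ω), ξ i ω * (XY i ω).2) := by
      filter_upwards [hSt_ae] with ω h
      rw [hφ_def]
      simp only
      rw [h]
      congr 1
      rw [← Finset.sum_sub_distrib]
      exact congrArg _ (Finset.sum_congr rfl fun i _ => mul_sub _ _ _)
    rw [lintegral_congr_ae hae]
    have e1 := lintegral_map' hφmeas.aemeasurable hfix.aemeasurable_fst
    have e2 := lintegral_map' hφmeas.aemeasurable hfix.aemeasurable_snd
    rw [← e1, hfix.map_eq, e2]
  -- the summands in ℝ≥0∞
  set η : ℕ → Ω → ℝ≥0∞ := fun i ω => if i < Nt ω then ENNReal.ofReal (ξ' i ω) else 0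
    with hη_def
  set ζf : ℕ → Ω → ℝ≥0∞ := fun i ω => ENNReal.ofReal |(XY' i ω).1 - (XY' i ω).2| with hζf_def
  have hηmeas : ∀ i, Measurable (η i) := by
    intro i
    apply Measurable.ite _ (hξ'meas i).ennreal_ofReal measurable_const
    exact hNtmeas measurableSet_Ioi
  have hζfmeas : ∀ i, Measurable (ζf i) := fun i =>
    ((measurable_fst.comp (hXY'meas i)).sub (measurable_snd.comp (hXY'meas i))).abs.ennreal_ofReal
  -- independence of η i and ζf i
  have hblockt : IndepFun (fun ω => (Nt ω, fun i => ξ' i ω)) (fun ω i => XY' i ω) P := by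
    set G : ℕ × (ℕ → ℝ) → ℕ :=
      fun p => sInf {m | ∑ i ∈ Finset.range m, p.2 i = ∑ i ∈ Finset.range p.1, p.2 i} with hG_def
    have hsum2 : Measurable fun p : ℕ × (ℕ → ℝ) => ∑ i ∈ Finset.range p.1, p.2 i := by
      have h : Measurable fun q : (ℕ → ℝ) × ℕ => ∑ i ∈ Finset.range q.2, q.1 i :=
        measurable_from_prod_countable_left fun n => by
          simpa using Finset.measurable_sum (Finset.range n) fun i _ => measurable_pi_apply i
      exact h.comp (measurable_snd.prodMk measurable_fst)
    have hGmeas : Measurable G := by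
      apply measurable_sInf_nat
      intro m
      exact measurableSet_eq_fun
        (Finset.measurable_sum (Finset.range m) fun i _ =>
          (measurable_pi_apply i).comp measurable_snd)
        hsum2
    have hK : Measurable fun p : ℕ × (ℕ → ℝ) => (G p, p.2) := hGmeas.prodMk measurable_snd
    have h1 := hblock.comp hK measurable_id
    refine h1.congr ?_ ?_
    · filter_upwards [hξ'ae, hW₀ae] with ω h1 h2
      show (G (N ω, fun i => ξ i ω), fun i => ξ i ω) = (Nt ω, fun i => ξ' i ω)
      have hxi : (fun i => ξ i ω) = fun i => ξ' i ω := funext fun i => (h1 i).symm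
      refine Prod.ext ?_ hxi
      show G (N ω, fun i => ξ i ω) = Nt ω
      rw [hG_def, hNt_def]
      simp only
      congr 1
      ext m
      simp only [Set.mem_setOf_eq]
      rw [Finset.sum_congr rfl fun i (_ : i ∈ Finset.range m) => (h1 i).symm,
        show ∑ i ∈ Finset.range (N ω), ξ i ω = W₀ ω from h2]
    · filter_upwards [hXY'ae] with ω h
      show (fun i => XY i ω) = fun i => XY' i ω
      exact funext fun i => (h i).symm
  have hindep_term : ∀ i, IndepFun (η i) (ζf i) P := by
    intro i
    have hφi : Measurable fun p : ℕ × (ℕ → ℝ) =>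
        if i < p.1 then ENNReal.ofReal (p.2 i) else 0 := by
      apply Measurable.ite _ ((measurable_pi_apply i).comp measurable_snd).ennreal_ofReal
        measurable_const
      exact measurable_fst measurableSet_Ioi
    have hψi : Measurable fun x : ℕ → ℝ × ℝ => ENNReal.ofReal |(x i).1 - (x i).2| := by
      exact ((measurable_fst.comp (measurable_pi_apply i)).sub
        (measurable_snd.comp (measurable_pi_apply i))).abs.ennreal_ofReal
    exact hblockt.comp hφi hψi
  -- each ζf i has lintegral ζbar
  have hζf_int : ∀ i, ∫⁻ ω, ζf i ω ∂P = ζbar := by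
    intro i
    have hae : (fun ω => ζf i ω) =ᵐ[P] fun ω => φ (XY i ω) := by
      filter_upwards [(hXYm i).ae_eq_mk] with ω h
      rw [hζf_def, hφ_def]
      simp only
      rw [show XY' i ω = XY i ω from h.symm]
    rw [lintegral_congr_ae hae]
    have e1 := lintegral_map' hφmeas.aemeasurable (hXYm i)
    have e2 := lintegral_map' hφmeas.aemeasurable (hXYm 0)
    rw [← e1, (hident i).map_eq, e2]
  -- total mass of the weights
  have hη_sum : ∫⁻ ω, (∑' i, η i ω) ∂P = 1 := by
    have hpt : (fun ω => ∑' i, η i ω) =ᵐ[P] fun ω => ENNReal.ofReal (W ω) := by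
      filter_upwards [hNfacts, hW₀ae] with ω hω h2
      obtain ⟨-, hmem, -⟩ := hω
      have ht : ∑' i, η i ω = ∑ i ∈ Finset.range (Nt ω), η i ω :=
        tsum_eq_sum fun i hi => by
          simp only [hη_def]; exact if_neg (by simpa using hi)
      have hs : ∑ i ∈ Finset.range (Nt ω), η i ω
          = ∑ i ∈ Finset.range (Nt ω), ENNReal.ofReal (ξ' i ω) :=
        Finset.sum_congr rfl fun i hi => by
          simp only [hη_def]; exact if_pos (Finset.mem_range.mp hi)
      rw [ht, hs, ← ENNReal.ofReal_sum_of_nonneg fun i _ => hξ'0 i ω, hmem, ← h2]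
    rw [lintegral_congr_ae hpt,
      ← ofReal_integral_eq_lintegral_ofReal hWint (ae_of_all _ fun ω =>
        Finset.sum_nonneg fun i _ => hξ0 i ω),
      hnorm, ENNReal.ofReal_one]
  -- the lintegral of ofReal ∘ Tt equals ζbar
  have hg_pt : ∀ ω, ENNReal.ofReal (Tt ω) = ∑' i, η i ω * ζf i ω := by
    intro ω
    have h1 : ENNReal.ofReal (Tt ω)
        = ∑ i ∈ Finset.range (Nt ω), ENNReal.ofReal (ξ' i ω * |(XY' i ω).1 - (XY' i ω).2|) := by
      rw [hTt_def]
      exact ENNReal.ofReal_sum_of_nonneg fun i _ =>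
        mul_nonneg (hξ'0 i ω) (abs_nonneg _)
    have h2 : ∀ i ∈ Finset.range (Nt ω),
        ENNReal.ofReal (ξ' i ω * |(XY' i ω).1 - (XY' i ω).2|) = η i ω * ζf i ω := by
      intro i hi
      rw [ENNReal.ofReal_mul (hξ'0 i ω)]
      simp only [hη_def, hζf_def]
      rw [if_pos (Finset.mem_range.mp hi)]
    rw [h1, Finset.sum_congr rfl h2]
    exact (tsum_eq_sum fun i hi => by
      simp only [hη_def]
      rw [if_neg (by simpa using hi), zero_mul]).symm
  have hg_lint : ∫⁻ ω, ENNReal.ofReal (Tt ω) ∂P = ζbar := by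
    rw [lintegral_congr hg_pt,
      lintegral_tsum (f := fun i ω => η i ω * ζf i ω) fun i => ((hηmeas i).mul (hζfmeas i)).aemeasurable]
    have hterm : ∀ i, ∫⁻ ω, η i ω * ζf i ω ∂P = (∫⁻ ω, η i ω ∂P) * ζbar := fun i => by
      rw [lintegral_mul_eq_lintegral_mul_lintegral_of_indepFun'' (hηmeas i).aemeasurable
        (hζfmeas i).aemeasurable (hindep_term i), hζf_int i]
    rw [tsum_congr hterm, ENNReal.tsum_mul_right,
      ← lintegral_tsum fun i => (hηmeas i).aemeasurable, hη_sum, one_mul]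
  -- pointwise inequality |St| ≤ Tt
  have hle_pt : ∀ ω, ENNReal.ofReal |St ω| ≤ ENNReal.ofReal (Tt ω) := by
    intro ω
    apply ENNReal.ofReal_le_ofReal
    rw [hSt_def, hTt_def]
    refine (Finset.abs_sum_le_sum_abs _ _).trans (le_of_eq ?_)
    exact Finset.sum_congr rfl fun i _ => by
      rw [abs_mul, abs_of_nonneg (hξ'0 i ω)]
  -- squeeze to get |St| = Tt a.e.
  have hfmeas : Measurable fun ω => ENNReal.ofReal |St ω| := hStmeas.abs.ennreal_ofReal
  have hgmeas : Measurable fun ω => ENNReal.ofReal (Tt ω) := hTtmeas.ennreal_ofReal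
  have hsub0 : ∫⁻ ω, (ENNReal.ofReal (Tt ω) - ENNReal.ofReal |St ω|) ∂P = 0 := by
    rw [lintegral_sub hfmeas (by rw [hfE_lint]; exact hζbar_ne) (ae_of_all _ hle_pt),
      hg_lint, hfE_lint, tsub_self]
  have heq_ae : ∀ᵐ ω ∂P, |St ω| = Tt ω := by
    have h0 := (lintegral_eq_zero_iff' ((hgmeas.sub hfmeas).aemeasurable)).mp hsub0
    filter_upwards [h0] with ω h
    have hle2 : ENNReal.ofReal (Tt ω) ≤ ENNReal.ofReal |St ω| := tsub_eq_zero_iff_le.mp h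
    have heq := le_antisymm (hle_pt ω) hle2
    have hTt0 : 0 ≤ Tt ω := Finset.sum_nonneg fun i _ => mul_nonneg (hξ'0 i ω) (abs_nonneg _)
    exact (ENNReal.ofReal_eq_ofReal_iff (abs_nonneg _) hTt0).mp heq
  filter_upwards [heq_ae, hSt_ae, hTt_ae] with ω h hS hT
  rw [← hS, ← hT]
  exact h
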